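/- Let θ > 0 and (Q_n)_{n≥1} iid nonnegative random variables with δ := P(Q₁ = 0) > 0 and sup_{t≥1} t·P(log Q₁ > t) ≤ (1-ε)θ for some ε ∈ (0,1) with δ ≥ e^{-εθ}. Then Σ_{n≥1} P(max_{1≤k≤n} e^{-(k-1)θ} Q_k ≤ 1/n) = ∞. -/

import Mathlib

open MeasureTheory ProbabilityTheory Filter

lemma aux_log_diff (θ t : ℝ) (hθ : 0 < θ) (ht : θ < t) :
    θ / t ≤ Real.log t - Real.log (t - θ) := by
  have h1 : 0 < t - θ := by linarith
  have h2 : 0 < t := by linarith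
  have h3 : Real.log ((t - θ)/t) ≤ (t - θ)/t - 1 :=
    Real.log_le_sub_one_of_pos (by positivity)
  rw [Real.log_div h1.ne' h2.ne'] at h3
  have h4 : (t - θ)/t - 1 = -(θ/t) := by field_simp; ring
  linarith [h3, h4.le, h4.ge]

lemma aux_exp_le (θ a : ℝ) (hθ : 0 < θ) (ha : 0 < a) (ha2 : a ≤ θ/(1+θ)) :
    Real.exp (-(a + (1+θ)*a^2)) ≤ 1 - a := by
  have h1 : 0 < 1 + θ := by linarith
  have halt : a < 1 := lt_of_le_of_lt ha2 (by rw [div_lt_one h1]; linarith)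
  have h1a : 0 < 1 - a := by linarith
  have key : -Real.log (1 - a) ≤ a + (1+θ)*a^2 := by
    have h3 : Real.log ((1-a)⁻¹) ≤ (1-a)⁻¹ - 1 :=
      Real.log_le_sub_one_of_pos (by positivity)
    rw [Real.log_inv] at h3
    have h5 : (1-a)⁻¹ - 1 = a/(1-a) := by field_simp; ring
    have h6 : a/(1-a) ≤ a + (1+θ)*a^2 := by
      rw [div_le_iff₀ h1a]
      have : a * (1+θ) ≤ θ := by rw [le_div_iff₀ h1] at ha2; nlinarith
      nlinarith
    linarith
  calc Real.exp (-(a + (1+θ)*a^2)) ≤ Real.exp (Real.log (1-a)) := by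
        apply Real.exp_le_exp.2; linarith
    _ = 1 - a := Real.exp_log h1a

set_option maxHeartbeats 2000000 in
lemma key_bound {Ω : Type*} [MeasureSpace Ω] [IsProbabilityMeasure (ℙ : Measure Ω)]
    (θ ε : ℝ) (hθ : 0 < θ) (hε : ε ∈ Set.Ioo (0 : ℝ) 1)
    (Q : ℕ → Ω → ℝ) (hQmeas : ∀ n, Measurable (Q n)) (hQ0 : ∀ n ω, 0 ≤ Q n ω)
    (hindep : iIndepFun Q ℙ)
    (hident : ∀ n, IdentDistrib (Q n) (Q 1) ℙ ℙ)
    (hδ : ENNReal.ofReal (Real.exp (-(ε * θ))) ≤ ℙ {ω | Q 1 ω = 0})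
    (htail : ∀ t : ℝ, 1 ≤ t →
      t * (ℙ {ω | t < Real.log (Q 1 ω)}).toReal ≤ (1 - ε) * θ) (n : ℕ) :
    ENNReal.ofReal (Real.exp (-(ε*(1+2*θ) + (1-ε)*Real.log (1+θ) + (1+θ)*(1-ε)^2*θ))
        * (1/((n:ℝ)+1)))
      ≤ ℙ {ω | ∀ k ∈ Finset.Icc 1 (n + 1),
        Real.exp (-((k : ℝ) - 1) * θ) * Q k ω ≤ 1 / (n + 1 : ℝ)} := by
  obtain ⟨hε0, hε1⟩ := hε
  obtain ⟨Nr, hNrdef⟩ : ∃ x : ℝ, x = (n:ℝ) + 1 := ⟨_, rfl⟩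
  have hNr1 : (1:ℝ) ≤ Nr := by
    rw [hNrdef]; have := Nat.cast_nonneg (α := ℝ) n; linarith
  have hNr0 : (0:ℝ) < Nr := by linarith
  rw [show ((n:ℝ) + 1) = Nr from hNrdef.symm]
  obtain ⟨L, hLdef⟩ : ∃ x : ℝ, x = Real.log Nr := ⟨_, rfl⟩
  have hL0 : 0 ≤ L := hLdef ▸ Real.log_nonneg hNr1
  obtain ⟨t, ht⟩ : ∃ t : ℕ → ℝ, t = fun k : ℕ => ((k:ℝ) - 1) * θ - L := ⟨_, rfl⟩
  obtain ⟨c, hc⟩ : ∃ c : ℕ → ℝ, c = fun k => Real.exp (t k) := ⟨_, rfl⟩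
  have hck : ∀ k, 0 < c k := fun k => hc ▸ Real.exp_pos _
  obtain ⟨A', hA'⟩ : ∃ x : ℝ, x = (1+θ)*(1-ε)^2*θ := ⟨_, rfl⟩
  have hA'0 : 0 ≤ A' :=
    hA' ▸ mul_nonneg (mul_nonneg (by linarith) (sq_nonneg _)) hθ.le
  obtain ⟨b, hb⟩ : ∃ b : ℕ → ℝ, b = fun k =>
      if t k ≤ 1 + θ then ε*θ else (1-ε)*θ/(t k) + (1+θ)*((1-ε)*θ/(t k))^2 := ⟨_, rfl⟩
  -- set rewrite
  have hset : {ω | ∀ k ∈ Finset.Icc 1 (n + 1),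
        Real.exp (-((k : ℝ) - 1) * θ) * Q k ω ≤ 1 / Nr}
      = ⋂ k ∈ Finset.Icc 1 (n+1), Q k ⁻¹' Set.Iic (c k) := by
    ext ω
    simp only [Set.mem_setOf_eq, Set.mem_iInter, Set.mem_preimage, Set.mem_Iic]
    refine forall_congr' fun k => forall_congr' fun hk => ?_
    have hcke : c k = Real.exp (((k:ℝ)-1)*θ) * (1/Nr) := by
      rw [hc]
      simp only [ht]
      rw [Real.exp_sub, hLdef, Real.exp_log hNr0, mul_one_div]
    rw [neg_mul, Real.exp_neg, inv_mul_le_iff₀ (Real.exp_pos _), hcke]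
  rw [hset, hindep.meas_biInter (fun i _ => ⟨Set.Iic (c i), measurableSet_Iic, rfl⟩)]
  have hident' : ∀ k, ℙ (Q k ⁻¹' Set.Iic (c k)) = ℙ (Q 1 ⁻¹' Set.Iic (c k)) :=
    fun k => (hident k).measure_mem_eq measurableSet_Iic
  -- per-factor bound
  have hfac : ∀ k ∈ Finset.Icc 1 (n+1),
      ENNReal.ofReal (Real.exp (-(b k))) ≤ ℙ (Q 1 ⁻¹' Set.Iic (c k)) := by
    intro k _
    by_cases hcase : t k ≤ 1 + θ
    · have hbk : b k = ε * θ := by simp only [hb, if_pos hcase]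
      rw [hbk]
      refine le_trans hδ (measure_mono ?_)
      intro ω hω
      simp only [Set.mem_setOf_eq] at hω
      simp only [Set.mem_preimage, Set.mem_Iic, hω]
      exact (hck k).le
    · push_neg at hcase
      have htk1 : (1:ℝ) ≤ t k := by linarith
      have htk0 : (0:ℝ) < t k := by linarith
      obtain ⟨a, ha⟩ : ∃ x : ℝ, x = (1-ε)*θ/(t k) := ⟨_, rfl⟩
      have ha0 : 0 < a := by
        rw [ha]; apply div_pos; nlinarith; exact htk0
      have ha2 : a ≤ θ/(1+θ) := by
        rw [ha]
        exact div_le_div₀ (le_of_lt hθ) (by nlinarith) (by linarith) (by linarith)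
      have hbk : b k = a + (1+θ)*a^2 := by
        simp only [hb, if_neg (not_le.2 hcase), ha]
      have hBmeas : MeasurableSet {ω | t k < Real.log (Q 1 ω)} :=
        (Real.measurable_log.comp (hQmeas 1)) measurableSet_Ioi
      have hsub : {ω | t k < Real.log (Q 1 ω)}ᶜ ⊆ Q 1 ⁻¹' Set.Iic (c k) := by
        intro ω hω
        simp only [Set.mem_compl_iff, Set.mem_setOf_eq, not_lt] at hω
        simp only [Set.mem_preimage, Set.mem_Iic, hc]
        rcases (hQ0 1 ω).lt_or_eq with hpos | heq
        · calc Q 1 ω = Real.exp (Real.log (Q 1 ω)) := (Real.exp_log hpos).symm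
            _ ≤ Real.exp (t k) := Real.exp_le_exp.2 hω
        · rw [← heq]; exact (Real.exp_pos _).le
      have hptail := htail (t k) htk1
      have hple : (ℙ {ω | t k < Real.log (Q 1 ω)}).toReal ≤ a := by
        rw [ha, le_div_iff₀ htk0]
        nlinarith [ENNReal.toReal_nonneg (a := ℙ {ω | t k < Real.log (Q 1 ω)})]
      have hcompl : ℙ {ω | t k < Real.log (Q 1 ω)}ᶜ
          = 1 - ℙ {ω | t k < Real.log (Q 1 ω)} := by
        rw [measure_compl hBmeas (measure_ne_top _ _), measure_univ]
      have h1B : (ℙ {ω | t k < Real.log (Q 1 ω)}ᶜ).toReal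
          = 1 - (ℙ {ω | t k < Real.log (Q 1 ω)}).toReal := by
        rw [hcompl, ENNReal.toReal_sub_of_le prob_le_one ENNReal.one_ne_top,
          ENNReal.toReal_one]
      have hexp : Real.exp (-(b k)) ≤ (ℙ {ω | t k < Real.log (Q 1 ω)}ᶜ).toReal := by
        rw [hbk, h1B]
        linarith [aux_exp_le θ a hθ ha0 ha2]
      calc ENNReal.ofReal (Real.exp (-(b k)))
          ≤ ENNReal.ofReal ((ℙ {ω | t k < Real.log (Q 1 ω)}ᶜ).toReal) :=
            ENNReal.ofReal_le_ofReal hexp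
        _ = ℙ {ω | t k < Real.log (Q 1 ω)}ᶜ := ENNReal.ofReal_toReal (measure_ne_top _ _)
        _ ≤ _ := measure_mono hsub
  -- product bound
  have hprod : ENNReal.ofReal (Real.exp (-(∑ k ∈ Finset.Icc 1 (n+1), b k)))
      ≤ ∏ k ∈ Finset.Icc 1 (n+1), ℙ (Q k ⁻¹' Set.Iic (c k)) := by
    have he : Real.exp (-(∑ k ∈ Finset.Icc 1 (n+1), b k))
        = ∏ k ∈ Finset.Icc 1 (n+1), Real.exp (-(b k)) := by
      rw [← Real.exp_sum, ← Finset.sum_neg_distrib]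
    rw [he, ENNReal.ofReal_prod_of_nonneg (fun i _ => (Real.exp_pos _).le)]
    exact Finset.prod_le_prod' fun k hk => (hident' k) ▸ hfac k hk
  refine le_trans ?_ hprod
  apply ENNReal.ofReal_le_ofReal
  -- sum bound
  have hsum : ∑ k ∈ Finset.Icc 1 (n+1), b k
      ≤ L + (ε*(1+2*θ) + (1-ε)*Real.log (1+θ) + A') := by
    obtain ⟨M, hM⟩ : ∃ x : ℝ, x = L + 1 + 2*θ := ⟨_, rfl⟩
    have hM0 : 0 ≤ M := by rw [hM]; linarith
    obtain ⟨u, hu⟩ : ∃ u : ℕ → ℝ, u = fun k => max (t k) 1 := ⟨_, rfl⟩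
    have hu1 : ∀ k, 1 ≤ u k := fun k => hu ▸ le_max_right _ _
    have hu0 : ∀ k, 0 < u k := fun k => lt_of_lt_of_le one_pos (hu1 k)
    have htstep : ∀ i : ℕ, t (i+1) = t i + θ := by
      intro i; simp only [ht]; push_cast; ring
    have humono : ∀ i : ℕ, u i ≤ u (i+1) := by
      intro i
      rw [hu]
      exact max_le_max (by rw [htstep]; linarith) le_rfl
    obtain ⟨F, hF⟩ : ∃ F : ℕ → ℝ, F = fun k : ℕ =>
        ε * min ((k:ℝ)*θ) M + (1-ε) * Real.log (u k) - A' * (u k)⁻¹ := ⟨_, rfl⟩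
    have hstep : ∀ i : ℕ, b (i+1) ≤ F (i+1) - F i := by
      intro i
      have hlog : Real.log (u i) ≤ Real.log (u (i+1)) :=
        Real.log_le_log (hu0 i) (humono i)
      have hlog' : (1-ε) * Real.log (u i) ≤ (1-ε) * Real.log (u (i+1)) :=
        mul_le_mul_of_nonneg_left hlog (by linarith)
      have hinv : (u (i+1))⁻¹ ≤ (u i)⁻¹ := inv_anti₀ (hu0 i) (humono i)
      have hinv' : A' * (u (i+1))⁻¹ ≤ A' * (u i)⁻¹ :=
        mul_le_mul_of_nonneg_left hinv hA'0
      by_cases hcase : t (i+1) ≤ 1 + θ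
      · have hiθ : (i:ℝ)*θ ≤ M - θ := by
          have h := hcase; simp only [ht] at h; push_cast at h
          rw [hM]; linarith
        have hmin : min ((i:ℝ)*θ) M + θ ≤ min (((i+1:ℕ):ℝ)*θ) M := by
          rw [min_eq_left (by linarith : (i:ℝ)*θ ≤ M)]
          apply le_min
          · push_cast; nlinarith
          · linarith
        have hmin' : ε * min ((i:ℝ)*θ) M + ε * θ ≤ ε * min (((i+1:ℕ):ℝ)*θ) M := by
          have h := mul_le_mul_of_nonneg_left hmin hε0.le
          nlinarith
        have hbk : b (i+1) = ε*θ := by simp only [hb, if_pos hcase]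
        rw [hbk]
        simp only [hF]
        linarith
      · push_neg at hcase
        have hs0 : 0 < t (i+1) := by linarith
        have hsθ0 : (0:ℝ) < t (i+1) - θ := by linarith
        have hti : t i = t (i+1) - θ := by rw [htstep]; ring
        have hsθ1 : 1 < t (i+1) - θ := by linarith
        have hui1 : u (i+1) = t (i+1) := by
          rw [hu]; exact max_eq_left (by linarith)
        have hui : u i = t (i+1) - θ := by
          rw [hu]; simp only [hti]; exact max_eq_left (by linarith)
        have hminmono : min ((i:ℝ)*θ) M ≤ min (((i+1:ℕ):ℝ)*θ) M := by
          apply min_le_min _ le_rfl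
          push_cast; nlinarith
        have hεmin : ε * min ((i:ℝ)*θ) M ≤ ε * min (((i+1:ℕ):ℝ)*θ) M :=
          mul_le_mul_of_nonneg_left hminmono hε0.le
        have hlogd : (1-ε)*θ/(t (i+1))
            ≤ (1-ε) * Real.log (t (i+1)) - (1-ε) * Real.log (t (i+1) - θ) := by
          have h := aux_log_diff θ (t (i+1)) hθ (by linarith)
          have h2 := mul_le_mul_of_nonneg_left h (by linarith : (0:ℝ) ≤ 1-ε)
          rw [mul_div_assoc]
          nlinarith
        have hquad : (1+θ)*((1-ε)*θ/(t (i+1)))^2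
            ≤ A' * (t (i+1) - θ)⁻¹ - A' * (t (i+1))⁻¹ := by
          have hinveq : (t (i+1) - θ)⁻¹ - (t (i+1))⁻¹ = θ/((t (i+1) - θ)*(t (i+1))) := by
            field_simp; ring
          have hexpand : (1+θ)*((1-ε)*θ/(t (i+1)))^2
              = ((1+θ)*(1-ε)^2*θ^2)/((t (i+1))^2) := by
            field_simp
          have key : ((1+θ)*(1-ε)^2*θ^2)/((t (i+1))^2)
              ≤ A' * (θ/((t (i+1) - θ)*(t (i+1)))) := by
            rw [hA', mul_div_assoc']
            rw [div_le_div_iff₀ (pow_pos hs0 2) (mul_pos hsθ0 hs0)]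
            have hfact : (0:ℝ) ≤ (1+θ)*(1-ε)^2*θ :=
              mul_nonneg (mul_nonneg (by linarith) (sq_nonneg _)) hθ.le
            nlinarith [mul_nonneg (mul_nonneg hfact hθ.le) (mul_nonneg hθ.le hs0.le)]
          rw [hexpand]
          calc ((1+θ)*(1-ε)^2*θ^2)/((t (i+1))^2)
              ≤ A' * (θ/((t (i+1) - θ)*(t (i+1)))) := key
            _ = A' * ((t (i+1) - θ)⁻¹ - (t (i+1))⁻¹) := by rw [hinveq]
            _ = A' * (t (i+1) - θ)⁻¹ - A' * (t (i+1))⁻¹ := by ring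
        have hbk : b (i+1) = (1-ε)*θ/(t (i+1)) + (1+θ)*((1-ε)*θ/(t (i+1)))^2 := by
          simp only [hb, if_neg (not_le.2 hcase)]
        rw [hbk]
        simp only [hF, hui1, hui]
        linarith
    have hF0 : F 0 = -A' := by
      have hu0e : u 0 = 1 := by
        rw [hu]
        simp only
        rw [max_eq_right]
        simp only [ht]; push_cast; nlinarith
      have hmin0 : min (((0:ℕ):ℝ)*θ) M = 0 := by
        rw [Nat.cast_zero, zero_mul]
        exact min_eq_left hM0
      rw [hF]
      simp only [hu0e, hmin0, Real.log_one, inv_one]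
      ring
    have hulog : Real.log (u (n+1)) ≤ L + Real.log (1+θ) := by
      have hule : u (n+1) ≤ Nr * (1+θ) := by
        rw [hu]
        apply max_le
        · simp only [ht, hNrdef]; push_cast; nlinarith
        · nlinarith
      calc Real.log (u (n+1)) ≤ Real.log (Nr*(1+θ)) :=
          Real.log_le_log (hu0 _) hule
        _ = L + Real.log (1+θ) := by
          rw [Real.log_mul hNr0.ne' (by linarith), hLdef]
    calc ∑ k ∈ Finset.Icc 1 (n+1), b k
        = ∑ i ∈ Finset.range (n+1), b (i+1) := by
          rw [← Finset.Ico_add_one_right_eq_Icc, Finset.sum_Ico_eq_sum_range]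
          exact Finset.sum_congr rfl fun i _ => by rw [add_comm]
      _ ≤ ∑ i ∈ Finset.range (n+1), (F (i+1) - F i) :=
          Finset.sum_le_sum fun i _ => hstep i
      _ = F (n+1) - F 0 := Finset.sum_range_sub F (n+1)
      _ ≤ L + (ε*(1+2*θ) + (1-ε)*Real.log (1+θ) + A') := by
          rw [hF0]
          have h1 : ε * min (((n+1:ℕ):ℝ)*θ) M ≤ ε*L + ε*(1+2*θ) := by
            have h := mul_le_mul_of_nonneg_left
              (min_le_right (((n+1:ℕ):ℝ)*θ) M) hε0.le
            have hεM : ε*M = ε*L + ε*(1+2*θ) := by rw [hM]; ring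
            linarith
          have h2 : (1-ε) * Real.log (u (n+1))
              ≤ L - ε*L + (1-ε)*Real.log (1+θ) := by
            calc (1-ε) * Real.log (u (n+1))
                ≤ (1-ε) * (L + Real.log (1+θ)) :=
                  mul_le_mul_of_nonneg_left hulog (by linarith)
              _ = L - ε*L + (1-ε)*Real.log (1+θ) := by ring
          have h3 : 0 ≤ A' * (u (n+1))⁻¹ :=
            mul_nonneg hA'0 (inv_nonneg.2 (hu0 _).le)
          simp only [hF]
          linarith
  -- conclude
  have hexpL : Real.exp (-L) = 1/Nr := by
    rw [hLdef, Real.exp_neg, Real.exp_log hNr0, one_div]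
  have hfin : Real.exp (-(ε*(1+2*θ) + (1-ε)*Real.log (1+θ) + A')) * (1/Nr)
      = Real.exp (-(L + (ε*(1+2*θ) + (1-ε)*Real.log (1+θ) + A'))) := by
    rw [← hexpL, ← Real.exp_add]
    congr 1
    ring
  rw [← hA', hfin]
  exact Real.exp_le_exp.2 (by linarith)

theorem stmt_7 {Ω : Type*} [MeasureSpace Ω] [IsProbabilityMeasure (ℙ : Measure Ω)]
    (θ ε : ℝ) (hθ : 0 < θ) (hε : ε ∈ Set.Ioo (0 : ℝ) 1)
    (Q : ℕ → Ω → ℝ) (hQmeas : ∀ n, Measurable (Q n)) (hQ0 : ∀ n ω, 0 ≤ Q n ω)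
    (hindep : iIndepFun Q ℙ)
    (hident : ∀ n, IdentDistrib (Q n) (Q 1) ℙ ℙ)
    (hatom : 0 < ℙ {ω | Q 1 ω = 0})
    (hδ : ENNReal.ofReal (Real.exp (-(ε * θ))) ≤ ℙ {ω | Q 1 ω = 0})
    (htail : ∀ t : ℝ, 1 ≤ t →
      t * (ℙ {ω | t < Real.log (Q 1 ω)}).toReal ≤ (1 - ε) * θ) :
    (∑' n : ℕ,
      ℙ {ω | ∀ k ∈ Finset.Icc 1 (n + 1),
        Real.exp (-((k : ℝ) - 1) * θ) * Q k ω ≤ 1 / (n + 1 : ℝ)}) = ⊤ := by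
  by_contra hne
  have hle := fun n => key_bound θ ε hθ hε Q hQmeas hQ0 hindep hident hδ htail n
  have hC0 : (0:ℝ) < Real.exp (-(ε*(1+2*θ) + (1-ε)*Real.log (1+θ) + (1+θ)*(1-ε)^2*θ)) :=
    Real.exp_pos _
  have h1 : ∑' n : ℕ, ENNReal.ofReal
      (Real.exp (-(ε*(1+2*θ) + (1-ε)*Real.log (1+θ) + (1+θ)*(1-ε)^2*θ)) * (1/((n:ℝ)+1)))
      ≠ ⊤ := by
    intro htop
    have hmono := ENNReal.tsum_le_tsum hle
    rw [htop] at hmono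
    exact hne (top_le_iff.1 hmono)
  have h2 := ENNReal.summable_toReal h1
  have h2' : Summable (fun n : ℕ =>
      Real.exp (-(ε*(1+2*θ) + (1-ε)*Real.log (1+θ) + (1+θ)*(1-ε)^2*θ)) * (1/((n:ℝ)+1))) := by
    refine h2.congr fun n => ?_
    rw [ENNReal.toReal_ofReal (by positivity)]
  have h3 : Summable (fun n : ℕ => 1/((n:ℝ)+1)) := by
    have h4 := h2'.mul_left
      (Real.exp (-(ε*(1+2*θ) + (1-ε)*Real.log (1+θ) + (1+θ)*(1-ε)^2*θ)))⁻¹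
    refine h4.congr fun n => ?_
    rw [← mul_assoc, inv_mul_cancel₀ hC0.ne', one_mul]
  have h5 : Summable (fun n : ℕ => 1/((n:ℝ))) := by
    rw [← summable_nat_add_iff 1]
    refine h3.congr fun n => ?_
    push_cast
    ring
  exact Real.not_summable_one_div_natCast h5
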